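/- arXiv:1903.06125 — 2 statements merged into one kernel-verified Lean document; each statement's English description precedes it below -/
import Mathlib

section
/- Let H₁, H₂ be Hilbert spaces, T ∈ B(H₁, H₂), and M ∈ B(H₁) a self-adjoint coercive operator, i.e. |⟨φ, Mφ⟩| ≥ c‖φ‖² for some c > 0 and all φ. Set F = T M T*. Then for g ∈ H₂ with g ≠ 0: g ∈ ran(T) if and only if inf{ |⟨u, F u⟩| : u ∈ H₂, ⟨u, g⟩ = 1 } > 0. -/
open MeasureTheory

section Aux

variable {H1 H2 : Type*}
    [NormedAddCommGroup H1] [InnerProductSpace ℂ H1] [CompleteSpace H1]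
    [NormedAddCommGroup H2] [InnerProductSpace ℂ H2] [CompleteSpace H2]

lemma stmt11_u0 (g : H2) (hg : g ≠ 0) :
    (inner ℂ ((((‖g‖ : ℂ))^2)⁻¹ • g) g : ℂ) = 1 := by
  have hne : ((‖g‖ : ℂ))^2 ≠ 0 :=
    pow_ne_zero 2 (Complex.ofReal_ne_zero.mpr (norm_ne_zero_iff.mpr hg))
  rw [inner_smul_left, inner_self_eq_norm_sq_to_K, map_inv₀, map_pow,
    Complex.conj_ofReal]
  exact inv_mul_cancel₀ hne

lemma stmt11_range (T : H1 →L[ℂ] H2) (g : H2) (hg : g ≠ 0) (δ : ℝ) (hδ : 0 < δ)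
    (hb : ∀ u : H2, (inner ℂ u g : ℂ) = 1 → δ ≤ ‖(ContinuousLinearMap.adjoint T) u‖) :
    ∃ φ : H1, T φ = g := by
  letI : InnerProductSpace ℝ H1 := InnerProductSpace.complexToReal
  set A := ContinuousLinearMap.adjoint T with hA
  set preK : Set H1 := {ψ | ∃ u : H2, (inner ℂ u g : ℂ) = 1 ∧ ψ = A u} with hpreK
  set K := closure preK with hK
  set u₀ : H2 := (((‖g‖ : ℂ))^2)⁻¹ • g with hu₀
  have hu₀g : (inner ℂ u₀ g : ℂ) = 1 := stmt11_u0 g hg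
  have hne : K.Nonempty := ⟨A u₀, subset_closure ⟨u₀, hu₀g, rfl⟩⟩
  have hconv : Convex ℝ K := by
    apply Convex.closure
    rintro x ⟨u, hu, rfl⟩ y ⟨v, hv, rfl⟩ a b ha hb' hab
    refine ⟨(a : ℂ) • u + (b : ℂ) • v, ?_, ?_⟩
    · rw [inner_add_left, inner_smul_left, inner_smul_left, hu, hv,
        Complex.conj_ofReal, Complex.conj_ofReal, mul_one, mul_one]
      exact_mod_cast hab
    · rw [map_add, A.map_smul, A.map_smul, Complex.coe_smul, Complex.coe_smul]
  obtain ⟨ψ₀, hψ₀K, hmin⟩ :=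
    exists_norm_eq_iInf_of_complete_convex hne isClosed_closure.isComplete hconv 0
  have hvar := (norm_eq_iInf_iff_real_inner_le_zero hconv hψ₀K).mp hmin
  have hvar' : ∀ w ∈ preK, ‖ψ₀‖ ^ 2 ≤ Complex.re (inner ℂ ψ₀ w : ℂ) := by
    intro w hw
    have h := hvar w (subset_closure hw)
    rw [zero_sub, inner_neg_left, inner_sub_right, neg_le, neg_zero] at h
    have hself : (inner ℝ ψ₀ ψ₀ : ℝ) = ‖ψ₀‖ ^ 2 := real_inner_self_eq_norm_sq ψ₀
    have hre : (inner ℝ ψ₀ w : ℝ) = Complex.re (inner ℂ ψ₀ w : ℂ) := real_inner_eq_re_inner ℂ ψ₀ w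
    linarith
  have hψ₀norm : δ ≤ ‖ψ₀‖ := by
    have hsub : K ⊆ {x : H1 | δ ≤ ‖x‖} := by
      apply closure_minimal _ (isClosed_le continuous_const continuous_norm)
      rintro x ⟨u, hu, rfl⟩
      exact hb u hu
    exact hsub hψ₀K
  have horth : ∀ v : H2, (inner ℂ v g : ℂ) = 0 → (inner ℂ (T ψ₀) v : ℂ) = 0 := by
    intro v hv
    have key : ∀ t : ℂ,
        ‖ψ₀‖ ^ 2 ≤ Complex.re ((inner ℂ ψ₀ (A u₀) : ℂ) + t * (inner ℂ ψ₀ (A v) : ℂ)) := by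
      intro t
      have hmem : A u₀ + t • A v ∈ preK := by
        refine ⟨u₀ + t • v, ?_, by simp⟩
        rw [inner_add_left, hu₀g, inner_smul_left, hv, mul_zero, add_zero]
      have h := hvar' _ hmem
      rwa [inner_add_right, inner_smul_right] at h
    set z : ℂ := inner ℂ ψ₀ (A v) with hz
    have hz0 : z = 0 := by
      by_contra hz0
      have hzn : 0 < ‖z‖ ^ 2 := by
        have := norm_pos_iff.mpr hz0
        positivity
      set s : ℝ := (Complex.re (inner ℂ ψ₀ (A u₀) : ℂ) - ‖ψ₀‖ ^ 2 + 1) / ‖z‖ ^ 2 with hs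
      have h := key (-(s : ℂ) * (starRingEnd ℂ) z)
      have hzz : (-(s : ℂ) * (starRingEnd ℂ) z) * z = ((-s * ‖z‖ ^ 2 : ℝ) : ℂ) := by
        rw [mul_assoc, mul_comm ((starRingEnd ℂ) z) z, Complex.mul_conj]
        push_cast [Complex.normSq_eq_norm_sq]
        ring
      rw [hzz, Complex.add_re, Complex.ofReal_re] at h
      have hs' : s * ‖z‖ ^ 2 = Complex.re (inner ℂ ψ₀ (A u₀) : ℂ) - ‖ψ₀‖ ^ 2 + 1 := by
        rw [hs]
        field_simp
      nlinarith [h]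
    have heq : (inner ℂ (T ψ₀) v : ℂ) = z := by
      rw [hz, ← inner_conj_symm (T ψ₀) v, ← ContinuousLinearMap.adjoint_inner_left T, ← hA,
        inner_conj_symm]
    rw [heq, hz0]
  have hggne : (inner ℂ g g : ℂ) ≠ 0 := fun h => hg (inner_self_eq_zero.mp h)
  set a : ℂ := (inner ℂ g (T ψ₀) : ℂ) / (inner ℂ g g : ℂ) with ha
  have hva : (inner ℂ (T ψ₀ - a • g) g : ℂ) = 0 := by
    rw [inner_sub_left, inner_smul_left, ha, map_div₀, inner_conj_symm, inner_conj_symm,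
      div_mul_cancel₀ _ hggne, sub_self]
  have hTg : T ψ₀ = a • g := by
    have h1 := horth _ hva
    have h2 : (inner ℂ (a • g) (T ψ₀ - a • g) : ℂ) = 0 := by
      rw [inner_smul_left, ← inner_conj_symm g (T ψ₀ - a • g), hva, map_zero, mul_zero]
    have h3 : (inner ℂ (T ψ₀ - a • g) (T ψ₀ - a • g) : ℂ) = 0 := by
      rw [inner_sub_left, h1, h2, sub_zero]
    have := inner_self_eq_zero.mp h3
    rwa [sub_eq_zero] at this
  have hre0 : ‖ψ₀‖ ^ 2 ≤ Complex.re (inner ℂ ψ₀ (A u₀) : ℂ) := hvar' _ ⟨u₀, hu₀g, rfl⟩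
  have h1 : (inner ℂ u₀ (T ψ₀) : ℂ) = a := by
    rw [hTg, inner_smul_right, hu₀g, mul_one]
  have h2 : (inner ℂ u₀ (T ψ₀) : ℂ) = (starRingEnd ℂ) (inner ℂ ψ₀ (A u₀) : ℂ) := by
    rw [← ContinuousLinearMap.adjoint_inner_left T, ← hA, inner_conj_symm]
  have hane : a ≠ 0 := by
    intro h0
    rw [h0] at h1
    have h3 : (inner ℂ ψ₀ (A u₀) : ℂ) = 0 := by
      have h4 := h2.symm.trans h1
      simpa using congrArg (starRingEnd ℂ) h4
    rw [h3, Complex.zero_re] at hre0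
    nlinarith [hψ₀norm, hδ]
  exact ⟨a⁻¹ • ψ₀, by rw [T.map_smul, hTg, smul_smul, inv_mul_cancel₀ hane, one_smul]⟩

end Aux

/-- the inf-criterion of the factorization method: for F = T M T*
with M self-adjoint and coercive, a nonzero g is in ran(T) iff
inf{ |⟨u, F u⟩| : ⟨u, g⟩ = 1 } > 0. -/
theorem stmt11 {H1 H2 : Type*}
    [NormedAddCommGroup H1] [InnerProductSpace ℂ H1] [CompleteSpace H1]
    [NormedAddCommGroup H2] [InnerProductSpace ℂ H2] [CompleteSpace H2]
    (T : H1 →L[ℂ] H2) (M : H1 →L[ℂ] H1) (hMsa : IsSelfAdjoint M)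
    (c : ℝ) (hc : 0 < c)
    (hcoerc : ∀ φ : H1, c * ‖φ‖ ^ 2 ≤ ‖(inner ℂ φ (M φ) : ℂ)‖)
    (F : H2 →L[ℂ] H2) (hF : F = (T.comp M).comp (ContinuousLinearMap.adjoint T))
    (g : H2) (hg : g ≠ 0) :
    (∃ φ : H1, T φ = g) ↔
      0 < sInf {r : ℝ | ∃ u : H2, (inner ℂ u g : ℂ) = 1 ∧ r = ‖(inner ℂ u (F u) : ℂ)‖} := by
  set A := ContinuousLinearMap.adjoint T with hA
  set S := {r : ℝ | ∃ u : H2, (inner ℂ u g : ℂ) = 1 ∧ r = ‖(inner ℂ u (F u) : ℂ)‖} with hS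
  have hbdd : BddBelow S := ⟨0, by rintro r ⟨u, _, rfl⟩; exact norm_nonneg _⟩
  set u₀ : H2 := (((‖g‖ : ℂ))^2)⁻¹ • g with hu₀
  have hu₀g : (inner ℂ u₀ g : ℂ) = 1 := stmt11_u0 g hg
  have hSne : S.Nonempty := ⟨_, u₀, hu₀g, rfl⟩
  have hinner : ∀ u : H2, (inner ℂ u (F u) : ℂ) = (inner ℂ (A u) (M (A u)) : ℂ) := by
    intro u
    rw [hF]
    simp only [ContinuousLinearMap.comp_apply]
    rw [← ContinuousLinearMap.adjoint_inner_left T, ← hA]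
  constructor
  · rintro ⟨φ, rfl⟩
    have hφ : φ ≠ 0 := by rintro rfl; exact hg (map_zero T)
    have hφn : 0 < ‖φ‖ := norm_pos_iff.mpr hφ
    have hpos : 0 < c / ‖φ‖ ^ 2 := by positivity
    refine lt_of_lt_of_le hpos (le_csInf hSne ?_)
    rintro r ⟨u, hu, rfl⟩
    have h1 : (inner ℂ (A u) φ : ℂ) = 1 := by
      rw [hA, ContinuousLinearMap.adjoint_inner_left, hu]
    have h2 : 1 ≤ ‖A u‖ * ‖φ‖ := by
      calc (1 : ℝ) = ‖(inner ℂ (A u) φ : ℂ)‖ := by rw [h1]; simp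
        _ ≤ ‖A u‖ * ‖φ‖ := norm_inner_le_norm _ _
    have h3 : c * ‖A u‖ ^ 2 ≤ ‖(inner ℂ u (F u) : ℂ)‖ := by
      rw [hinner]; exact hcoerc _
    have h4 : 1 / ‖φ‖ ≤ ‖A u‖ := by
      rw [div_le_iff₀ hφn]; linarith
    have h5 : (1 / ‖φ‖) ^ 2 ≤ ‖A u‖ ^ 2 := by
      apply pow_le_pow_left₀ (by positivity) h4
    calc c / ‖φ‖ ^ 2 = c * (1 / ‖φ‖) ^ 2 := by field_simp
      _ ≤ c * ‖A u‖ ^ 2 := by nlinarith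
      _ ≤ ‖(inner ℂ u (F u) : ℂ)‖ := h3
  · intro hpos
    set m := sInf S with hm
    have hmem : ∀ u : H2, (inner ℂ u g : ℂ) = 1 → m ≤ ‖(inner ℂ u (F u) : ℂ)‖ := by
      intro u hu
      exact csInf_le hbdd ⟨u, hu, rfl⟩
    have hMpos : 0 < ‖M‖ := by
      rcases (norm_nonneg M).lt_or_eq with h | h
      · exact h
      · exfalso
        have hM0 : M = 0 := by rwa [eq_comm, norm_eq_zero] at h
        have := hmem u₀ hu₀g
        rw [hinner, hM0] at this
        simp at this
        linarith
    have hmδ : 0 < m / ‖M‖ := div_pos hpos hMpos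
    apply stmt11_range T g hg (Real.sqrt (m / ‖M‖)) (Real.sqrt_pos.mpr hmδ)
    intro u hu
    rw [← hA]
    have h1 : m ≤ ‖M‖ * ‖A u‖ ^ 2 := by
      calc m ≤ ‖(inner ℂ u (F u) : ℂ)‖ := hmem u hu
        _ = ‖(inner ℂ (A u) (M (A u)) : ℂ)‖ := by rw [hinner]
        _ ≤ ‖A u‖ * ‖M (A u)‖ := norm_inner_le_norm _ _
        _ ≤ ‖A u‖ * (‖M‖ * ‖A u‖) := by
            apply mul_le_mul_of_nonneg_left (M.le_opNorm _) (norm_nonneg _)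
        _ = ‖M‖ * ‖A u‖ ^ 2 := by ring
    have h2 : m / ‖M‖ ≤ ‖A u‖ ^ 2 := by
      rw [div_le_iff₀ hMpos]; linarith
    calc Real.sqrt (m / ‖M‖) ≤ Real.sqrt (‖A u‖ ^ 2) := Real.sqrt_le_sqrt h2
      _ = ‖A u‖ := Real.sqrt_sq (norm_nonneg _)
end

section
/- Let H₁, H₂ be Hilbert spaces, T ∈ B(H₁, H₂), and M ∈ B(H₁) self-adjoint with M ≥ c > 0. Then ran(T M T*)^{1/2} = ran(T), where (T M T*)^{1/2} is the positive square root of the nonnegative operator T M T*. -/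
open MeasureTheory ContinuousLinearMap

/-- Douglas-type lemma: if `⟪y, x⟫` is dominated by `‖A* x‖`, then `y ∈ range A`. -/
lemma douglas_aux {H1 H2 : Type*}
    [NormedAddCommGroup H1] [InnerProductSpace ℂ H1] [CompleteSpace H1]
    [NormedAddCommGroup H2] [InnerProductSpace ℂ H2] [CompleteSpace H2]
    (A : H1 →L[ℂ] H2) (y : H2) (C : ℝ)
    (h : ∀ x : H2, ‖(inner ℂ y x : ℂ)‖ ≤ C * ‖ContinuousLinearMap.adjoint A x‖) :
    y ∈ Set.range (⇑A) := by
  set B : H2 →ₗ[ℂ] H1 := (ContinuousLinearMap.adjoint A : H2 →L[ℂ] H1).toLinearMap with hB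
  set ℓ : H2 →ₗ[ℂ] ℂ := (innerSL ℂ y : H2 →L[ℂ] ℂ).toLinearMap with hℓ
  have hker : LinearMap.ker B ≤ LinearMap.ker ℓ := by
    intro x hx
    rw [LinearMap.mem_ker] at hx ⊢
    have := h x
    rw [show (ContinuousLinearMap.adjoint A) x = B x from rfl, hx] at this
    simp only [norm_zero, mul_zero] at this
    have : ‖(inner ℂ y x : ℂ)‖ = 0 := le_antisymm this (norm_nonneg _)
    simpa [hℓ] using norm_eq_zero.mp this
  set f₀ : LinearMap.range B →ₗ[ℂ] ℂ :=
    ((LinearMap.ker B).liftQ ℓ hker).comp (B.quotKerEquivRange.symm : LinearMap.range B →ₗ[ℂ] (H2 ⧸ LinearMap.ker B)) with hf₀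
  have hf₀eval : ∀ x : H2, f₀ ⟨B x, LinearMap.mem_range_self B x⟩ = inner ℂ y x := by
    intro x
    have h1 : B.quotKerEquivRange.symm ⟨B x, LinearMap.mem_range_self B x⟩
        = (LinearMap.ker B).mkQ x := B.quotKerEquivRange_symm_apply_image x _
    simp only [hf₀, LinearMap.comp_apply, LinearEquiv.coe_coe, h1]
    simp [hℓ]
  have hbound : ∀ v : LinearMap.range B, ‖f₀ v‖ ≤ C * ‖v‖ := by
    rintro ⟨v, x, rfl⟩
    rw [hf₀eval x]
    simpa [hB] using h x
  set f : (LinearMap.range B) →L[ℂ] ℂ := LinearMap.mkContinuous f₀ C hbound with hf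
  obtain ⟨g, hg, -⟩ := exists_extension_norm_eq (LinearMap.range B) f
  set z : H1 := (InnerProductSpace.toDual ℂ H1).symm g with hz
  refine ⟨z, ?_⟩
  apply ext_inner_right ℂ
  intro x
  have h1 : (inner ℂ (A z) x : ℂ) = inner ℂ z (ContinuousLinearMap.adjoint A x) :=
    (ContinuousLinearMap.adjoint_inner_right A z x).symm
  have h2 : (inner ℂ z (ContinuousLinearMap.adjoint A x) : ℂ) = g (B x) := by
    rw [hz]
    exact InnerProductSpace.toDual_symm_apply
  have h3 : g (B x) = f ⟨B x, LinearMap.mem_range_self B x⟩ :=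
    hg ⟨B x, LinearMap.mem_range_self B x⟩
  rw [h1, h2, h3]
  exact hf₀eval x

/-- range identity of the factorization method: if M is self-adjoint
with M ≥ c > 0, then ran((T M T*)^{1/2}) = ran(T). -/
theorem stmt12 {H1 H2 : Type*}
    [NormedAddCommGroup H1] [InnerProductSpace ℂ H1] [CompleteSpace H1]
    [NormedAddCommGroup H2] [InnerProductSpace ℂ H2] [CompleteSpace H2]
    (T : H1 →L[ℂ] H2) (M : H1 →L[ℂ] H1) (hMsa : IsSelfAdjoint M)
    (c : ℝ) (hc : 0 < c)
    (hM : ∀ φ : H1, c * ‖φ‖ ^ 2 ≤ (inner ℂ (M φ) φ : ℂ).re)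
    (F : H2 →L[ℂ] H2) (hF : F = (T.comp M).comp (ContinuousLinearMap.adjoint T))
    -- S is the positive square root of the nonnegative operator F = T M T*
    (S : H2 →L[ℂ] H2) (hS : S.IsPositive) (hS2 : S.comp S = F) :
    Set.range (⇑S) = Set.range (⇑T) := by
  have hSsa : ContinuousLinearMap.adjoint S = S := hS.isSelfAdjoint.adjoint_eq
  -- the key norm identity : ‖S x‖² = Re ⟪M (T* x), T* x⟫
  have key : ∀ x : H2,
      ‖S x‖ ^ 2 = (inner ℂ (M (ContinuousLinearMap.adjoint T x)) (ContinuousLinearMap.adjoint T x) : ℂ).re := by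
    intro x
    have h1 : (inner ℂ (S (S x)) x : ℂ) = inner ℂ (S x) (S x) := by
      conv_lhs => rw [show S (S x) = ContinuousLinearMap.adjoint S (S x) by rw [hSsa]]
      exact ContinuousLinearMap.adjoint_inner_left S x (S x)
    have h2 : S (S x) = T (M (ContinuousLinearMap.adjoint T x)) := by
      have := congrArg (fun G : H2 →L[ℂ] H2 => G x) hS2
      simpa [hF] using this
    have h3 : (inner ℂ (T (M (ContinuousLinearMap.adjoint T x))) x : ℂ)
        = inner ℂ (M (ContinuousLinearMap.adjoint T x)) (ContinuousLinearMap.adjoint T x) :=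
      (ContinuousLinearMap.adjoint_inner_right T _ x).symm
    have h4 : (inner ℂ (S x) (S x) : ℂ).re = ‖S x‖ ^ 2 := by
      simpa using inner_self_eq_norm_sq (𝕜 := ℂ) (S x)
    rw [← h4, ← h1, h2, h3]
  -- lower bound : √c ‖T* x‖ ≤ ‖S x‖
  have lower : ∀ x : H2, Real.sqrt c * ‖ContinuousLinearMap.adjoint T x‖ ≤ ‖S x‖ := by
    intro x
    have h1 : c * ‖ContinuousLinearMap.adjoint T x‖ ^ 2 ≤ ‖S x‖ ^ 2 := (key x) ▸ hM _
    have h2 := Real.sqrt_le_sqrt h1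
    rwa [Real.sqrt_mul hc.le, Real.sqrt_sq (norm_nonneg _), Real.sqrt_sq (norm_nonneg _)] at h2
  -- upper bound : ‖S x‖ ≤ √‖M‖ ‖T* x‖
  have upper : ∀ x : H2, ‖S x‖ ≤ Real.sqrt ‖M‖ * ‖ContinuousLinearMap.adjoint T x‖ := by
    intro x
    set u := ContinuousLinearMap.adjoint T x
    have h1 : ‖S x‖ ^ 2 ≤ ‖M‖ * ‖u‖ ^ 2 := by
      rw [key x]
      calc (inner ℂ (M u) u : ℂ).re ≤ ‖(inner ℂ (M u) u : ℂ)‖ := Complex.re_le_norm _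
        _ ≤ ‖M u‖ * ‖u‖ := norm_inner_le_norm _ _
        _ ≤ (‖M‖ * ‖u‖) * ‖u‖ := by
            have := M.le_opNorm u
            nlinarith [norm_nonneg u]
        _ = ‖M‖ * ‖u‖ ^ 2 := by ring
    have h2 := Real.sqrt_le_sqrt h1
    rwa [Real.sqrt_mul (norm_nonneg M), Real.sqrt_sq (norm_nonneg _), Real.sqrt_sq (norm_nonneg _)] at h2
  apply Set.eq_of_subset_of_subset
  · -- ran S ⊆ ran T
    rintro _ ⟨w, rfl⟩
    apply douglas_aux T (S w) (‖w‖ * Real.sqrt ‖M‖)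
    intro x
    have h1 : (inner ℂ (S w) x : ℂ) = inner ℂ w (S x) := by
      conv_rhs => rw [← hSsa]
      exact (ContinuousLinearMap.adjoint_inner_right S w x).symm
    calc ‖(inner ℂ (S w) x : ℂ)‖ = ‖(inner ℂ w (S x) : ℂ)‖ := by rw [h1]
      _ ≤ ‖w‖ * ‖S x‖ := norm_inner_le_norm _ _
      _ ≤ ‖w‖ * (Real.sqrt ‖M‖ * ‖ContinuousLinearMap.adjoint T x‖) := by
          exact mul_le_mul_of_nonneg_left (upper x) (norm_nonneg _)
      _ = ‖w‖ * Real.sqrt ‖M‖ * ‖ContinuousLinearMap.adjoint T x‖ := by ring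
  · -- ran T ⊆ ran S
    rintro _ ⟨w, rfl⟩
    apply douglas_aux S (T w) (‖w‖ / Real.sqrt c)
    intro x
    have hsc : 0 < Real.sqrt c := Real.sqrt_pos.mpr hc
    have h1 : (inner ℂ (T w) x : ℂ) = inner ℂ w (ContinuousLinearMap.adjoint T x) :=
      (ContinuousLinearMap.adjoint_inner_right T w x).symm
    have h2 : ‖ContinuousLinearMap.adjoint T x‖ ≤ ‖S x‖ / Real.sqrt c := by
      rw [le_div_iff₀ hsc]
      calc ‖ContinuousLinearMap.adjoint T x‖ * Real.sqrt c
          = Real.sqrt c * ‖ContinuousLinearMap.adjoint T x‖ := by ring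
        _ ≤ ‖S x‖ := lower x
    calc ‖(inner ℂ (T w) x : ℂ)‖ = ‖(inner ℂ w (ContinuousLinearMap.adjoint T x) : ℂ)‖ := by rw [h1]
      _ ≤ ‖w‖ * ‖ContinuousLinearMap.adjoint T x‖ := norm_inner_le_norm _ _
      _ ≤ ‖w‖ * (‖S x‖ / Real.sqrt c) := mul_le_mul_of_nonneg_left h2 (norm_nonneg _)
      _ = ‖w‖ / Real.sqrt c * ‖ContinuousLinearMap.adjoint S x‖ := by rw [hSsa]; ring
end
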